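/- For the discrete gradient descent iterates X_{n+1} = X_n - Δt∇Ψ(X_n) with 0 < Δt ≤ 1/L and initial energy Ψ(X₀) = E₀ < E_m, every iterate satisfies min_{i≠j} ‖X_nⁱ - X_nʲ‖ ≥ m for all n ≥ 0 (discrete-time collision avoidance). -/

import Mathlib

open Set InnerProductSpace

lemma descent {F : Type*} [NormedAddCommGroup F] [InnerProductSpace ℝ F] [CompleteSpace F]
    (Ψ : F → ℝ) (hΨ : ∀ x, HasGradientAt Ψ (gradient Ψ x) x)
    (L : ℝ) (hlip : ∀ x y, ‖gradient Ψ x - gradient Ψ y‖ ≤ L * ‖x - y‖)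
    (x v : F) :
    Ψ (x + v) ≤ Ψ x + ⟪gradient Ψ x, v⟫_ℝ + L / 2 * ‖v‖ ^ 2 := by
  set g : ℝ → ℝ := fun t => Ψ (x + t • v) - t * ⟪gradient Ψ x, v⟫_ℝ - L * t ^ 2 / 2 * ‖v‖ ^ 2
    with hg
  have hline : ∀ t : ℝ, HasDerivAt (fun t : ℝ => x + t • v) v t := fun t =>
    by simpa using ((hasDerivAt_id t).smul_const v).const_add x
  have hderiv : ∀ t : ℝ, HasDerivAt g
      (⟪gradient Ψ (x + t • v), v⟫_ℝ - ⟪gradient Ψ x, v⟫_ℝ - L * t * ‖v‖ ^ 2) t := by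
    intro t
    have h1 : HasDerivAt (fun t : ℝ => Ψ (x + t • v)) (⟪gradient Ψ (x + t • v), v⟫_ℝ) t := by
      have := (hΨ (x + t • v)).hasFDerivAt.comp_hasDerivAt t (hline t)
      refine this.congr_deriv ?_
      simp
    have h2 : HasDerivAt (fun t : ℝ => t * ⟪gradient Ψ x, v⟫_ℝ) (⟪gradient Ψ x, v⟫_ℝ) t := by
      simpa using (hasDerivAt_id t).mul_const _
    have h3 : HasDerivAt (fun t : ℝ => L * t ^ 2 / 2 * ‖v‖ ^ 2) (L * t * ‖v‖ ^ 2) t := by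
      have : HasDerivAt (fun t : ℝ => t ^ 2) (2 * t) t := by
        simpa using hasDerivAt_pow 2 t
      have := ((this.const_mul L).div_const 2).mul_const (‖v‖ ^ 2)
      refine this.congr_deriv ?_
      ring
    exact (h1.sub h2).sub h3
  have hanti : AntitoneOn g (Icc 0 1) := by
    apply antitoneOn_of_deriv_nonpos (convex_Icc 0 1)
    · exact fun t _ => ((hderiv t).continuousAt).continuousWithinAt
    · exact fun t _ => (hderiv t).differentiableAt.differentiableWithinAt
    · intro t ht
      rw [interior_Icc] at ht
      rw [(hderiv t).deriv]
      have hcs : ⟪gradient Ψ (x + t • v) - gradient Ψ x, v⟫_ℝ ≤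
          ‖gradient Ψ (x + t • v) - gradient Ψ x‖ * ‖v‖ := real_inner_le_norm _ _
      have hl : ‖gradient Ψ (x + t • v) - gradient Ψ x‖ ≤ L * (t * ‖v‖) := by
        have := hlip (x + t • v) x
        simpa [norm_smul, abs_of_pos ht.1, mul_assoc] using this
      have hv : (0:ℝ) ≤ ‖v‖ := norm_nonneg _
      nlinarith [inner_sub_left (𝕜 := ℝ) (gradient Ψ (x + t • v)) (gradient Ψ x) v]
  have := hanti (left_mem_Icc.2 zero_le_one) (right_mem_Icc.2 zero_le_one) zero_le_one
  simp only [hg, one_smul, zero_smul, add_zero, one_pow, zero_pow, one_mul, zero_mul,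
    mul_zero, sub_zero] at this
  linarith

theorem stmt_5 {N : ℕ}
    (Ψ : PiLp 2 (fun _ : Fin N => EuclideanSpace ℝ (Fin 2)) → ℝ)
    (hΨ : ∀ x, HasGradientAt Ψ (gradient Ψ x) x)
    (L : ℝ) (hL : 0 < L)
    (hlip : ∀ x y, ‖gradient Ψ x - gradient Ψ y‖ ≤ L * ‖x - y‖)
    (m Em : ℝ) (hm : 0 < m)
    (hpen : ∀ Y : PiLp 2 (fun _ : Fin N => EuclideanSpace ℝ (Fin 2)),
      (∃ i j, i ≠ j ∧ ‖Y i - Y j‖ < m) → Em ≤ Ψ Y)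
    (Δt : ℝ) (hΔt : 0 < Δt) (hΔt' : Δt ≤ 1 / L)
    (X : ℕ → PiLp 2 (fun _ : Fin N => EuclideanSpace ℝ (Fin 2)))
    (hX : ∀ n, X (n + 1) = X n - Δt • gradient Ψ (X n))
    (hE0 : Ψ (X 0) < Em) :
    ∀ n : ℕ, ∀ i j : Fin N, i ≠ j → m ≤ ‖X n i - X n j‖ := by
  have hmono : ∀ n, Ψ (X (n + 1)) ≤ Ψ (X n) := by
    intro n
    set x := X n
    set v := -(Δt • gradient Ψ x) with hv
    have key := descent Ψ hΨ L hlip x v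
    have hxv : x + v = X (n + 1) := by rw [hX n, sub_eq_add_neg]
    rw [hxv] at key
    have hinner : ⟪gradient Ψ x, v⟫_ℝ = -(Δt * ‖gradient Ψ x‖ ^ 2) := by
      rw [hv, inner_neg_right, real_inner_smul_right, real_inner_self_eq_norm_sq]
    have hnv : ‖v‖ ^ 2 = Δt ^ 2 * ‖gradient Ψ x‖ ^ 2 := by
      rw [hv, norm_neg, norm_smul, Real.norm_eq_abs, abs_of_pos hΔt, mul_pow]
    rw [hinner, hnv] at key
    have hLΔt : L * Δt ≤ 1 := by
      have := (le_div_iff₀ hL).1 hΔt'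
      linarith [mul_comm L Δt ▸ this]
    nlinarith [sq_nonneg ‖gradient Ψ x‖]
  have hbound : ∀ n, Ψ (X n) < Em := by
    intro n
    induction n with
    | zero => exact hE0
    | succ k ih => exact lt_of_le_of_lt (hmono k) ih
  intro n i j hij
  by_contra h
  push_neg at h
  exact absurd (hpen (X n) ⟨i, j, hij, h⟩) (not_le.2 (hbound n))
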